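/- Let X be a finite nonempty type with n := Fintype.card X. Over the parameter range x ≤ n - 1, y ≤ n, x ≤ y, the sets of the classification family are pairwise distinct: A_K(x,y) = A_K(x',y') implies (x,y) = (x',y'); A_D(x,y) = A_D(x',y') implies (x,y) = (x',y'); and A_K(x,y) ≠ A_D(x',y') for all admissible parameters (every A_K contains a pair of the form (w, ∅) while no A_D does). Consequently the family contains exactly n(n+3) distinct sets. -/

import Mathlib

/-- The characteristic set of the K-plane system `S_K(x, y-1)`: level-1 minterms
`(w, S)` with either `w ∉ S` and `|S| ≤ x`, or `w ∈ S` and `|S| ≤ y`. -/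
def AK {X : Type*} (x y : ℕ) : Set (X × Set X) :=
  {p | (p.1 ∉ p.2 ∧ p.2.ncard ≤ x) ∨ (p.1 ∈ p.2 ∧ p.2.ncard ≤ y)}

/-- The characteristic set of the D-plane system `S_D(x, y-1)`: level-1 minterms
`(w, S)` with either `w ∉ S` and `1 ≤ |S| ≤ x`, or `w ∈ S` and `|S| ≤ y`. -/
def AD {X : Type*} (x y : ℕ) : Set (X × Set X) :=
  {p | (p.1 ∉ p.2 ∧ 1 ≤ p.2.ncard ∧ p.2.ncard ≤ x) ∨ (p.1 ∈ p.2 ∧ p.2.ncard ≤ y)}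

section Aux

variable {X : Type*} [Fintype X] [Nonempty X]

lemma ncard_compl_singleton' (w : X) : ({w}ᶜ : Set X).ncard = Fintype.card X - 1 := by
  have h := Set.ncard_add_ncard_compl ({w} : Set X)
  rw [Set.ncard_singleton, Nat.card_eq_fintype_card] at h
  omega

lemma exists_notmem' (w : X) (k : ℕ) (hk : k ≤ Fintype.card X - 1) :
    ∃ S : Set X, w ∉ S ∧ S.ncard = k := by
  obtain ⟨T, hT, hcard⟩ := Set.exists_subset_card_eq (s := ({w}ᶜ : Set X)) (n := k)
    (by rw [ncard_compl_singleton']; exact hk)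
  exact ⟨T, fun hw => (hT hw) rfl, hcard⟩

lemma exists_mem' (w : X) (k : ℕ) (h1 : 1 ≤ k) (hk : k ≤ Fintype.card X) :
    ∃ S : Set X, w ∈ S ∧ S.ncard = k := by
  obtain ⟨T, hT, hcard⟩ := Set.exists_subset_card_eq (s := ({w}ᶜ : Set X)) (n := k - 1)
    (by rw [ncard_compl_singleton']; omega)
  refine ⟨insert w T, Set.mem_insert _ _, ?_⟩
  rw [Set.ncard_insert_of_notMem (fun hw => (hT hw) rfl) (Set.toFinite T)]
  omega

lemma AK_param_le' {x y x' y' : ℕ} (hx' : x' ≤ Fintype.card X - 1) (hy' : y' ≤ Fintype.card X)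
    (h : AK (X := X) x y = AK (X := X) x' y') : x' ≤ x ∧ y' ≤ y := by
  obtain ⟨w⟩ := ‹Nonempty X›
  constructor
  · by_contra hc
    push_neg at hc
    obtain ⟨S, hwS, hS⟩ := exists_notmem' w (x + 1) (by omega)
    have hS2 : ((w, S) : X × Set X).2.ncard = x + 1 := hS
    have h1 : (w, S) ∈ AK (X := X) x' y' := Or.inl ⟨hwS, by omega⟩
    rw [← h] at h1
    simp only [AK, Set.mem_setOf_eq] at h1
    rcases h1 with ⟨_, h2⟩ | ⟨h2, _⟩
    · omega
    · exact hwS h2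
  · by_contra hc
    push_neg at hc
    obtain ⟨S, hwS, hS⟩ := exists_mem' w (y + 1) (by omega) (by omega)
    have hS2 : ((w, S) : X × Set X).2.ncard = y + 1 := hS
    have h1 : (w, S) ∈ AK (X := X) x' y' := Or.inr ⟨hwS, by omega⟩
    rw [← h] at h1
    simp only [AK, Set.mem_setOf_eq] at h1
    rcases h1 with ⟨h2, _⟩ | ⟨_, h2⟩
    · exact h2 hwS
    · omega

lemma AD_param_le' {x y x' y' : ℕ} (hx' : x' ≤ Fintype.card X - 1) (hy' : y' ≤ Fintype.card X)
    (h : AD (X := X) x y = AD (X := X) x' y') : x' ≤ x ∧ y' ≤ y := by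
  obtain ⟨w⟩ := ‹Nonempty X›
  constructor
  · by_contra hc
    push_neg at hc
    obtain ⟨S, hwS, hS⟩ := exists_notmem' w (x + 1) (by omega)
    have hS2 : ((w, S) : X × Set X).2.ncard = x + 1 := hS
    have h1 : (w, S) ∈ AD (X := X) x' y' := Or.inl ⟨hwS, by omega, by omega⟩
    rw [← h] at h1
    simp only [AD, Set.mem_setOf_eq] at h1
    rcases h1 with ⟨_, _, h2⟩ | ⟨h2, _⟩
    · omega
    · exact hwS h2
  · by_contra hc
    push_neg at hc
    obtain ⟨S, hwS, hS⟩ := exists_mem' w (y + 1) (by omega) (by omega)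
    have hS2 : ((w, S) : X × Set X).2.ncard = y + 1 := hS
    have h1 : (w, S) ∈ AD (X := X) x' y' := Or.inr ⟨hwS, by omega⟩
    rw [← h] at h1
    simp only [AD, Set.mem_setOf_eq] at h1
    rcases h1 with ⟨h2, _⟩ | ⟨_, h2⟩
    · exact h2 hwS
    · omega

lemma empty_mem_AK' (x y : ℕ) (w : X) : (w, (∅ : Set X)) ∈ AK (X := X) x y :=
  Or.inl ⟨Set.notMem_empty w, by simp⟩

lemma empty_not_mem_AD' (x y : ℕ) (w : X) : (w, (∅ : Set X)) ∉ AD (X := X) x y := by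
  simp [AD]

lemma AK_ne_AD' (x y x' y' : ℕ) : AK (X := X) x y ≠ AD (X := X) x' y' := by
  obtain ⟨w⟩ := ‹Nonempty X›
  intro h
  exact empty_not_mem_AD' x' y' w (h ▸ empty_mem_AK' x y w)

lemma twice_card_P (n : ℕ) :
    2 * ((Finset.range n ×ˢ Finset.range (n + 1)).filter fun p => p.1 ≤ p.2).card
      = n * (n + 3) := by
  have hP : ((Finset.range n ×ˢ Finset.range (n + 1)).filter fun p => p.1 ≤ p.2)
      = (Finset.range n).biUnion (fun a => (Finset.Icc a n).image fun b => (a, b)) := by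
    ext ⟨a, b⟩
    simp only [Finset.mem_filter, Finset.mem_product, Finset.mem_range, Finset.mem_biUnion,
      Finset.mem_image, Finset.mem_Icc, Prod.mk.injEq]
    constructor
    · rintro ⟨⟨h1, h2⟩, h3⟩
      exact ⟨a, h1, b, ⟨h3, by omega⟩, rfl, rfl⟩
    · rintro ⟨a', h1, b', ⟨h2, h3⟩, rfl, rfl⟩
      exact ⟨⟨h1, by omega⟩, h2⟩
  rw [hP, Finset.card_biUnion]
  · have hc : ∀ a ∈ Finset.range n, ((Finset.Icc a n).image fun b => (a, b)).card = n + 1 - a := by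
      intro a ha
      rw [Finset.card_image_of_injective _ (fun b c h => (Prod.mk.injEq _ _ _ _ ▸ h).2),
        Nat.card_Icc]
    rw [Finset.sum_congr rfl hc]
    have hrefl := Finset.sum_range_reflect (fun a => n + 1 - a) n
    have hstep : ∀ j ∈ Finset.range n, n + 1 - (n - 1 - j) = j + 2 := by
      intro j hj
      rw [Finset.mem_range] at hj
      omega
    rw [← hrefl, Finset.sum_congr rfl hstep, Finset.sum_add_distrib, Finset.sum_const,
      Finset.card_range, smul_eq_mul]
    have hgauss := Finset.sum_range_id_mul_two n
    rcases n with _ | m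
    · simp
    · simp only [Nat.succ_sub_one] at hgauss
      nlinarith [hgauss]
  · intro a _ a' _ hne
    simp only [Finset.disjoint_left, Finset.mem_image]
    rintro ⟨u, v⟩ ⟨b, _, h⟩ ⟨b', _, h'⟩
    obtain ⟨rfl, rfl⟩ := Prod.mk.injEq .. ▸ h
    obtain ⟨rfl, rfl⟩ := Prod.mk.injEq .. ▸ h'
    exact hne rfl

end Aux

/-- Over the admissible parameter range (`x ≤ n - 1`, `y ≤ n`, `x ≤ y`) the
classification family is pairwise distinct: `A_K`'s with different parameters
differ, `A_D`'s with different parameters differ, and no `A_K` equals any `A_D`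
(every `A_K` contains a pair `(w, ∅)` while no `A_D` does); consequently the
family consists of exactly `n(n+3)` distinct sets. -/
theorem AK_AD_pairwise_distinct {X : Type*} [Fintype X] [Nonempty X] :
    (∀ x y x' y' : ℕ, x ≤ Fintype.card X - 1 → y ≤ Fintype.card X → x ≤ y →
      x' ≤ Fintype.card X - 1 → y' ≤ Fintype.card X → x' ≤ y' →
      AK (X := X) x y = AK (X := X) x' y' → (x, y) = (x', y')) ∧
    (∀ x y x' y' : ℕ, x ≤ Fintype.card X - 1 → y ≤ Fintype.card X → x ≤ y →
      x' ≤ Fintype.card X - 1 → y' ≤ Fintype.card X → x' ≤ y' →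
      AD (X := X) x y = AD (X := X) x' y' → (x, y) = (x', y')) ∧
    (∀ x y x' y' : ℕ, x ≤ Fintype.card X - 1 → y ≤ Fintype.card X → x ≤ y →
      x' ≤ Fintype.card X - 1 → y' ≤ Fintype.card X → x' ≤ y' →
      AK (X := X) x y ≠ AD (X := X) x' y') ∧
    (∀ x y : ℕ, ∀ w : X, (w, (∅ : Set X)) ∈ AK (X := X) x y) ∧
    (∀ x y : ℕ, ∀ w : X, (w, (∅ : Set X)) ∉ AD (X := X) x y) ∧
    {A : Set (X × Set X) | ∃ x y : ℕ, x ≤ Fintype.card X - 1 ∧ y ≤ Fintype.card X ∧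
        x ≤ y ∧ (A = AK x y ∨ A = AD x y)}.ncard
      = Fintype.card X * (Fintype.card X + 3) := by
  have hn : 1 ≤ Fintype.card X := Fintype.card_pos
  set n := Fintype.card X with hndef
  have hKinj : ∀ x y x' y' : ℕ, x ≤ n - 1 → y ≤ n → x ≤ y →
      x' ≤ n - 1 → y' ≤ n → x' ≤ y' →
      AK (X := X) x y = AK (X := X) x' y' → (x, y) = (x', y') := by
    intro x y x' y' hx hy _ hx' hy' _ h
    obtain ⟨h1, h2⟩ := AK_param_le' hx' hy' h
    obtain ⟨h3, h4⟩ := AK_param_le' hx hy h.symm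
    exact Prod.ext (by omega) (by omega)
  have hDinj : ∀ x y x' y' : ℕ, x ≤ n - 1 → y ≤ n → x ≤ y →
      x' ≤ n - 1 → y' ≤ n → x' ≤ y' →
      AD (X := X) x y = AD (X := X) x' y' → (x, y) = (x', y') := by
    intro x y x' y' hx hy _ hx' hy' _ h
    obtain ⟨h1, h2⟩ := AD_param_le' hx' hy' h
    obtain ⟨h3, h4⟩ := AD_param_le' hx hy h.symm
    exact Prod.ext (by omega) (by omega)
  refine ⟨hKinj, hDinj, fun x y x' y' _ _ _ _ _ _ => AK_ne_AD' x y x' y',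
    empty_mem_AK', empty_not_mem_AD', ?_⟩
  set P : Finset (ℕ × ℕ) :=
    (Finset.range n ×ˢ Finset.range (n + 1)).filter (fun p => p.1 ≤ p.2) with hPdef
  have hmemP : ∀ p : ℕ × ℕ, p ∈ P ↔ p.1 < n ∧ p.2 < n + 1 ∧ p.1 ≤ p.2 := by
    intro p
    simp [hPdef, Finset.mem_filter, Finset.mem_product, and_assoc]
  have hSeq : {A : Set (X × Set X) | ∃ x y : ℕ, x ≤ n - 1 ∧ y ≤ n ∧
        x ≤ y ∧ (A = AK x y ∨ A = AD x y)}
      = (fun p : ℕ × ℕ => AK (X := X) p.1 p.2) '' ↑P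
        ∪ (fun p : ℕ × ℕ => AD (X := X) p.1 p.2) '' ↑P := by
    ext A
    simp only [Set.mem_setOf_eq, Set.mem_union, Set.mem_image, Finset.mem_coe]
    constructor
    · rintro ⟨x, y, hx, hy, hxy, (rfl | rfl)⟩
      · exact Or.inl ⟨(x, y), (hmemP (x, y)).2 ⟨by omega, by omega, hxy⟩, rfl⟩
      · exact Or.inr ⟨(x, y), (hmemP (x, y)).2 ⟨by omega, by omega, hxy⟩, rfl⟩
    · rintro (⟨⟨x, y⟩, hp, rfl⟩ | ⟨⟨x, y⟩, hp, rfl⟩) <;>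
        obtain ⟨h1, h2, h3⟩ := (hmemP _).1 hp
      · exact ⟨x, y, by omega, by omega, h3, Or.inl rfl⟩
      · exact ⟨x, y, by omega, by omega, h3, Or.inr rfl⟩
  rw [hSeq]
  have hKinjOn : Set.InjOn (fun p : ℕ × ℕ => AK (X := X) p.1 p.2) ↑P := by
    rintro ⟨x, y⟩ hp ⟨x', y'⟩ hp' h
    obtain ⟨h1, h2, h3⟩ := (hmemP _).1 hp
    obtain ⟨h1', h2', h3'⟩ := (hmemP _).1 hp'
    exact hKinj x y x' y' (by omega) (by omega) h3 (by omega) (by omega) h3' h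
  have hDinjOn : Set.InjOn (fun p : ℕ × ℕ => AD (X := X) p.1 p.2) ↑P := by
    rintro ⟨x, y⟩ hp ⟨x', y'⟩ hp' h
    obtain ⟨h1, h2, h3⟩ := (hmemP _).1 hp
    obtain ⟨h1', h2', h3'⟩ := (hmemP _).1 hp'
    exact hDinj x y x' y' (by omega) (by omega) h3 (by omega) (by omega) h3' h
  have hdisj : Disjoint ((fun p : ℕ × ℕ => AK (X := X) p.1 p.2) '' ↑P)
      ((fun p : ℕ × ℕ => AD (X := X) p.1 p.2) '' ↑P) := by
    rw [Set.disjoint_left]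
    rintro A ⟨⟨x, y⟩, _, rfl⟩ ⟨⟨x', y'⟩, _, h⟩
    exact AK_ne_AD' x y x' y' h.symm
  rw [Set.ncard_union_eq hdisj ((P.finite_toSet).image _) ((P.finite_toSet).image _),
    Set.ncard_image_of_injOn hKinjOn, Set.ncard_image_of_injOn hDinjOn,
    Set.ncard_coe_finset]
  have := twice_card_P n
  rw [← hPdef] at this
  omega
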